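/- For every finitely generated infinite group Q, there exists a finitely generated subgroup G of the symmetric group Sym(Q) of all permutations of the underlying set of Q such that G contains the finitary symmetric group FSym(Q), FSym(Q) is normal in G, and the quotient G/FSym(Q) is isomorphic to Q. -/

import Mathlib

/-- The finitary symmetric group on a set `Ω`: the subgroup of `Equiv.Perm Ω` consisting of
permutations with finite support. -/
def FSym (Ω : Type*) : Subgroup (Equiv.Perm Ω) where
  carrier := {g | {x | g x ≠ x}.Finite}
  one_mem' := by simp
  mul_mem' := by
    intro g h hg hh
    refine Set.Finite.subset (hg.union hh) ?_
    intro x hx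
    by_contra hc
    simp only [Set.mem_union, Set.mem_setOf_eq, not_or, not_not] at hc
    simp only [Set.mem_setOf_eq, Equiv.Perm.mul_apply, hc.2, hc.1] at hx
    exact hx rfl
  inv_mem' := by
    intro g hg
    refine Set.Finite.subset hg ?_
    intro x hx
    simp only [Set.mem_setOf_eq] at hx ⊢
    intro h
    exact hx (by rw [Equiv.Perm.inv_eq_iff_eq, h])

theorem FSym.normal (Ω : Type*) : (FSym Ω).Normal := by
  constructor
  intro σ hσ g
  refine Set.Finite.subset (hσ.image g) ?_
  intro x hx
  simp only [Set.mem_setOf_eq] at hx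
  refine ⟨g⁻¹ x, ?_, by simp⟩
  simp only [Set.mem_setOf_eq]
  intro h
  apply hx
  simp only [Equiv.Perm.mul_apply, h]
  simp

/-- For every finitely generated infinite group `Q` there is a finitely generated subgroup `G`
of `Sym(Q)` with `FSym(Q) ⊴ G ≤ Sym(Q)` and `G / FSym(Q) ≅ Q`. -/
theorem exists_fg_subgroup_with_fsym_quotient (Q : Type*) [Group Q] [Group.FG Q] [Infinite Q] :
    ∃ G : Subgroup (Equiv.Perm Q), G.FG ∧ FSym Q ≤ G ∧
      ∃ _ : ((FSym Q).subgroupOf G).Normal,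
        Nonempty ((G ⧸ (FSym Q).subgroupOf G) ≃* Q) := by
  classical
  obtain ⟨Sgen, hSgen⟩ : (⊤ : Subgroup Q).FG := Group.FG.out
  set L : Q →* Equiv.Perm Q := MulAction.toPermHom Q Q with hLdef
  have hLapp : ∀ q x : Q, L q x = q * x := fun q x => rfl
  -- the finite generating set
  set T : Finset (Equiv.Perm Q) :=
    Sgen.image L ∪ Sgen.image (fun s => Equiv.swap 1 s) with hTdef
  set G : Subgroup (Equiv.Perm Q) := Subgroup.closure (T : Set (Equiv.Perm Q)) with hGdef
  -- range of L is in G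
  have hLmem : ∀ q : Q, L q ∈ G := by
    intro q
    have h1 : L q ∈ Subgroup.map L ⊤ := ⟨q, trivial, rfl⟩
    rw [← hSgen, MonoidHom.map_closure] at h1
    refine Subgroup.closure_mono ?_ h1
    intro x hx
    obtain ⟨s, hs, rfl⟩ := hx
    exact Finset.mem_coe.2 (Finset.mem_union_left _ (Finset.mem_image_of_mem _ hs))
  -- the basic swaps are in G
  have hswap : ∀ (q : Q), ∀ s ∈ Sgen, Equiv.swap q (q * s) ∈ G := by
    intro q s hs
    have h1 : Equiv.swap (1 : Q) s ∈ G :=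
      Subgroup.subset_closure
        (Finset.mem_coe.2 (Finset.mem_union_right _ (Finset.mem_image_of_mem _ hs)))
    have h2 : Equiv.swap q (q * s) = L q * Equiv.swap 1 s * (L q)⁻¹ := by
      have := Equiv.swap_apply_apply (L q) 1 s
      rwa [hLapp, hLapp, mul_one] at this
    rw [h2]
    exact mul_mem (mul_mem (hLmem q) h1) (inv_mem (hLmem q))
  -- the set of swaps we use
  set S₀ : Set (Equiv.Perm Q) :=
    {σ | ∃ q s : Q, s ∈ Sgen ∧ q ≠ q * s ∧ σ = Equiv.swap q (q * s)} with hS₀def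
  have hS₀swap : ∀ f ∈ S₀, f.IsSwap := by
    rintro f ⟨q, s, _, hne, rfl⟩
    exact ⟨q, q * s, hne, rfl⟩
  -- transitivity of the orbit
  have horb : ∀ w : Q, ∀ x : Q, x * w ∈ MulAction.orbit (Subgroup.closure S₀) x := by
    intro w
    have hw : w ∈ Subgroup.closure (Sgen : Set Q) := by rw [hSgen]; trivial
    induction hw using Subgroup.closure_induction with
    | mem s hs =>
      intro x
      by_cases hxs : x = x * s
      · rw [← hxs]; exact MulAction.mem_orbit_self x
      · refine ⟨⟨Equiv.swap x (x * s), Subgroup.subset_closure ⟨x, s, hs, hxs, rfl⟩⟩, ?_⟩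
        exact Equiv.swap_apply_left x (x * s)
    | one => intro x; rw [mul_one]; exact MulAction.mem_orbit_self x
    | mul u v hu hv ihu ihv =>
      intro x
      rw [← mul_assoc, ← MulAction.orbit_eq_iff.mpr (ihu x)]
      exact ihv (x * u)
    | inv u hu ihu =>
      intro x
      have h : x ∈ MulAction.orbit (Subgroup.closure S₀) (x * u⁻¹) := by
        have := ihu (x * u⁻¹)
        rwa [inv_mul_cancel_right] at this
      rw [MulAction.orbit_eq_iff.mpr h]
      exact MulAction.mem_orbit_self _
  -- FSym ≤ closure S₀ ≤ G
  have hS₀le : Subgroup.closure S₀ ≤ G := by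
    rw [Subgroup.closure_le]
    rintro f ⟨q, s, hs, _, rfl⟩
    exact hswap q s hs
  have hFSym_le : FSym Q ≤ G := by
    intro f hf
    refine hS₀le ((mem_closure_isSwap hS₀swap).2 ⟨?_, ?_⟩)
    · refine Set.Finite.subset hf ?_
      intro x hx
      simpa [MulAction.fixedBy] using hx
    · intro x
      have := horb (x⁻¹ * f x) x
      rwa [mul_inv_cancel_left] at this
  -- normality
  have hnorm : (FSym Q).Normal := FSym.normal Q
  haveI : ((FSym Q).subgroupOf G).Normal := hnorm.subgroupOf G
  refine ⟨G, ⟨T, rfl⟩, hFSym_le, inferInstance, ?_⟩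
  -- the homomorphism Q → G ⧸ N
  set L' : Q →* G := L.codRestrict G hLmem with hL'def
  set ψ : Q →* G ⧸ (FSym Q).subgroupOf G :=
    (QuotientGroup.mk' ((FSym Q).subgroupOf G)).comp L' with hψdef
  have hinj : Function.Injective ψ := by
    rw [injective_iff_map_eq_one]
    intro q hq
    by_contra hq1
    have hmem : L' q ∈ (FSym Q).subgroupOf G := (QuotientGroup.eq_one_iff _).1 hq
    have hfin : {x : Q | L q x ≠ x}.Finite := hmem
    have huniv : {x : Q | L q x ≠ x} = Set.univ := by
      ext x
      simp only [Set.mem_setOf_eq, Set.mem_univ, iff_true, hLapp, ne_eq, mul_eq_right]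
      exact hq1
    rw [huniv] at hfin
    exact Set.infinite_univ hfin
  have hGle : G ≤ L.range ⊔ FSym Q := by
    rw [hGdef, Subgroup.closure_le]
    intro f hf
    rcases Finset.mem_union.1 (Finset.mem_coe.1 hf) with h | h
    · obtain ⟨s, _, rfl⟩ := Finset.mem_image.1 h
      exact Subgroup.mem_sup_left ⟨s, rfl⟩
    · obtain ⟨s, _, rfl⟩ := Finset.mem_image.1 h
      refine Subgroup.mem_sup_right ?_
      show ({x : Q | Equiv.swap 1 s x ≠ x}).Finite
      refine Set.Finite.subset ((Set.finite_singleton s).insert (1 : Q)) ?_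
      intro x hx
      simp only [Set.mem_setOf_eq] at hx
      by_contra hc
      simp only [Set.mem_insert_iff, Set.mem_singleton_iff, not_or] at hc
      exact hx (Equiv.swap_apply_of_ne_of_ne hc.1 hc.2)
  have hsurj : Function.Surjective ψ := by
    intro x
    induction x using QuotientGroup.induction_on with
    | H g =>
      have hg : (g : Equiv.Perm Q) ∈ (↑(L.range ⊔ FSym Q) : Set (Equiv.Perm Q)) := hGle g.2
      rw [Subgroup.mul_normal] at hg
      obtain ⟨h, hh, n, hn, hprod⟩ := hg
      obtain ⟨q, rfl⟩ := hh
      refine ⟨q, ?_⟩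
      show QuotientGroup.mk (L' q) = QuotientGroup.mk g
      rw [QuotientGroup.eq]
      show ((L' q)⁻¹ * g : G) ∈ (FSym Q).subgroupOf G
      have : ((L' q)⁻¹ * g : G) = ((L q)⁻¹ * g : Equiv.Perm Q) := rfl
      show ((L q)⁻¹ * (g : Equiv.Perm Q)) ∈ FSym Q
      rw [← hprod, inv_mul_cancel_left]
      exact hn
  exact ⟨(MulEquiv.ofBijective ψ ⟨hinj, hsurj⟩).symm⟩
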